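/- arXiv:2109.00713 — 5 statements merged into one kernel-verified Lean document; each statement's English description precedes it below -/
import Mathlib

section
/- For an irreducible generator Q with stationary distribution π, the fundamental matrix Q⁻ := (1π − Q)⁻¹ exists and equals D♯ + 1π, where D♯ is the deviation matrix. -/
open Matrix MeasureTheory

/-- `Q` is a generator matrix of a finite CTMC: nonnegative off-diagonal entries
and zero row sums. -/
def IsGenerator {n : Type*} [Fintype n] (Q : Matrix n n ℝ) : Prop :=
  (∀ i j, i ≠ j → 0 ≤ Q i j) ∧ ∀ i, ∑ j, Q i j = 0

/-- Irreducibility of the CTMC with generator `Q`: the transition matrix `e^Q`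
is entrywise positive. -/
def IsIrreducibleGen {n : Type*} [Fintype n] [DecidableEq n] (Q : Matrix n n ℝ) : Prop :=
  ∀ i j, 0 < NormedSpace.exp Q i j

/-- `π` is a stationary distribution of the generator `Q`: `πQ = 0`, `π1 = 1`. -/
def IsStationaryDist {n : Type*} [Fintype n] (Q : Matrix n n ℝ) (π : n → ℝ) : Prop :=
  (∀ i, 0 ≤ π i) ∧ (∑ i, π i = 1) ∧ π ᵥ* Q = 0

/-- The rank-one matrix `1π`. -/
def onePi {n : Type*} (π : n → ℝ) : Matrix n n ℝ :=
  Matrix.of fun _ j => π j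

/-- `Ds` is the deviation matrix `D♯ = ∫₀^∞ (e^{Qu} − 1π) du` of `Q`
(entrywise convergent integral). -/
def IsDeviation {n : Type*} [Fintype n] [DecidableEq n] (Q : Matrix n n ℝ) (π : n → ℝ)
    (Ds : Matrix n n ℝ) : Prop :=
  ∀ i j, IntegrableOn (fun u => NormedSpace.exp (u • Q) i j - π j) (Set.Ioi (0:ℝ)) MeasureTheory.volume ∧
    Ds i j = ∫ u in Set.Ioi (0:ℝ), (NormedSpace.exp (u • Q) i j - π j)

/-- `Dt` is the transient deviation matrix `D♯(t) = ∫₀^t (e^{Qu} − 1π) du` of `Q`. -/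
def IsTransientDeviation {n : Type*} [Fintype n] [DecidableEq n] (Q : Matrix n n ℝ) (π : n → ℝ)
    (Dt : ℝ → Matrix n n ℝ) : Prop :=
  ∀ t i j, Dt t i j = ∫ u in Set.Ioc (0:ℝ) t, (NormedSpace.exp (u • Q) i j - π j)

namespace Stmt3Aux

attribute [local instance] Matrix.linftyOpSemiNormedRing Matrix.linftyOpNormedRing
  Matrix.linftyOpNormedAlgebra

open NormedSpace Set Filter Topology

variable {p : ℕ} (Q : Matrix (Fin p) (Fin p) ℝ) (π : Fin p → ℝ)

lemma entry_hasDerivAt (i j : Fin p) (u : ℝ) :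
    HasDerivAt (fun u : ℝ => exp (u • Q) i j) ((Q * exp (u • Q)) i j) u := by
  have h := hasDerivAt_exp_smul_const' (𝕂 := ℝ) Q u
  have := ((Matrix.entryLinearMap ℝ ℝ i j).toContinuousLinearMap.hasFDerivAt).comp_hasDerivAt u h
  exact this

lemma exp_comm (u : ℝ) : exp (u • Q) * Q = Q * exp (u • Q) :=
  (((Commute.refl Q).smul_left u).exp_left).eq

lemma exp_zero_entry (i j : Fin p) : exp ((0:ℝ) • Q) i j = (1 : Matrix (Fin p) (Fin p) ℝ) i j := by
  rw [zero_smul, exp_zero]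

/-- rows of `e^{uQ}` sum to one -/
lemma rowsum (hQ : ∀ i, ∑ j, Q i j = 0) (i : Fin p) (u : ℝ) :
    ∑ j, exp (u • Q) i j = 1 := by
  have hderiv : ∀ v : ℝ, HasDerivAt (fun v : ℝ => ∑ j, exp (v • Q) i j) 0 v := by
    intro v
    have h := HasDerivAt.fun_sum (fun j (_ : j ∈ Finset.univ) => entry_hasDerivAt Q i j v)
    have hz : ∑ j, (Q * exp (v • Q)) i j = 0 := by
      rw [← exp_comm]
      simp only [Matrix.mul_apply]
      rw [Finset.sum_comm]
      have : ∀ k, ∑ j, exp (v • Q) i k * Q k j = exp (v • Q) i k * ∑ j, Q k j := by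
        intro k; rw [Finset.mul_sum]
      simp [this, hQ]
    rwa [hz] at h
  have hconst := is_const_of_deriv_eq_zero (f := fun v : ℝ => ∑ j, exp (v • Q) i j)
    (fun v => (hderiv v).differentiableAt) (fun v => (hderiv v).deriv) u 0
  rw [hconst]
  simp [exp_zero_entry, Matrix.one_apply]

/-- `π e^{uQ} = π` -/
lemma pi_invariant (hπQ : π ᵥ* Q = 0) (j : Fin p) (u : ℝ) :
    ∑ i, π i * exp (u • Q) i j = π j := by
  have hderiv : ∀ v : ℝ, HasDerivAt (fun v : ℝ => ∑ i, π i * exp (v • Q) i j) 0 v := by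
    intro v
    have h := HasDerivAt.fun_sum (fun i (_ : i ∈ Finset.univ) =>
      (entry_hasDerivAt Q i j v).const_mul (π i))
    have hz : ∑ i, π i * (Q * exp (v • Q)) i j = 0 := by
      simp only [Matrix.mul_apply, Finset.mul_sum]
      rw [Finset.sum_comm]
      have : ∀ k, ∑ i, π i * (Q i k * exp (v • Q) k j)
          = (π ᵥ* Q) k * exp (v • Q) k j := by
        intro k
        simp [Matrix.vecMul, dotProduct, Finset.sum_mul, mul_assoc]
      simp [this, hπQ]
    rwa [hz] at h
  have hconst := is_const_of_deriv_eq_zero (f := fun v : ℝ => ∑ i, π i * exp (v • Q) i j)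
    (fun v => (hderiv v).differentiableAt) (fun v => (hderiv v).deriv) u 0
  rw [hconst]
  simp [exp_zero_entry, Matrix.one_apply]


variable {Q π} {Ds : Matrix (Fin p) (Fin p) ℝ}

lemma QE_eq (hQ : ∀ i, ∑ j, Q i j = 0) (i j : Fin p) (u : ℝ) :
    (Q * exp (u • Q)) i j = ∑ k, Q i k * (exp (u • Q) k j - π j) := by
  simp only [Matrix.mul_apply, mul_sub, Finset.sum_sub_distrib, ← Finset.sum_mul]
  rw [hQ i]
  ring

lemma EQ_eq (hπQ : π ᵥ* Q = 0) (i j : Fin p) (u : ℝ) :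
    ∑ k, (exp (u • Q) i k - π k) * Q k j = (Q * exp (u • Q)) i j := by
  have h1 : ∑ k, (exp (u • Q) i k - π k) * Q k j
      = (exp (u • Q) * Q) i j - (π ᵥ* Q) j := by
    simp [Matrix.mul_apply, sub_mul, Finset.sum_sub_distrib, Matrix.vecMul, dotProduct]
  rw [h1, hπQ, exp_comm]
  simp

lemma QE_integrable (hQ : ∀ i, ∑ j, Q i j = 0)
    (hint : ∀ i j, IntegrableOn (fun u => exp (u • Q) i j - π j) (Ioi (0:ℝ)) volume)
    (i j : Fin p) :
    IntegrableOn (fun u => (Q * exp (u • Q)) i j) (Ioi (0:ℝ)) volume := by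
  simp only [QE_eq (π := π) hQ i j]
  exact integrable_finset_sum _ (fun k _ => ((hint k j).const_mul _))

lemma tendsto_entry (hQ : ∀ i, ∑ j, Q i j = 0)
    (hint : ∀ i j, IntegrableOn (fun u => exp (u • Q) i j - π j) (Ioi (0:ℝ)) volume)
    (i j : Fin p) :
    Tendsto (fun u : ℝ => exp (u • Q) i j) atTop (𝓝 (π j)) := by
  have h0 : Tendsto (fun u : ℝ => exp (u • Q) i j - π j) atTop (𝓝 0) :=
    tendsto_zero_of_hasDerivAt_of_integrableOn_Ioi (a := 0)
      (f' := fun u : ℝ => (Q * exp (u • Q)) i j)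
      (fun x _ => ((entry_hasDerivAt Q i j x).sub_const (π j)))
      (QE_integrable hQ hint i j) (hint i j)
  have := h0.add_const (π j)
  simpa using this

lemma integral_QE (hQ : ∀ i, ∑ j, Q i j = 0)
    (hint : ∀ i j, IntegrableOn (fun u => exp (u • Q) i j - π j) (Ioi (0:ℝ)) volume)
    (i j : Fin p) :
    ∫ u in Ioi (0:ℝ), (Q * exp (u • Q)) i j
      = π j - (1 : Matrix (Fin p) (Fin p) ℝ) i j := by
  have h := integral_Ioi_of_hasDerivAt_of_tendsto (a := 0)
    (f := fun u : ℝ => exp (u • Q) i j) (f' := fun u : ℝ => (Q * exp (u • Q)) i j)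
    ((entry_hasDerivAt Q i j 0).continuousAt.continuousWithinAt)
    (fun x _ => entry_hasDerivAt Q i j x)
    (QE_integrable hQ hint i j) (tendsto_entry hQ hint i j)
  rw [h, exp_zero_entry]

lemma QDs_entry (hQ : ∀ i, ∑ j, Q i j = 0)
    (hint : ∀ i j, IntegrableOn (fun u => exp (u • Q) i j - π j) (Ioi (0:ℝ)) volume)
    (hDsval : ∀ i j, Ds i j = ∫ u in Ioi (0:ℝ), (exp (u • Q) i j - π j))
    (i j : Fin p) : (Q * Ds) i j = π j - (1 : Matrix (Fin p) (Fin p) ℝ) i j := by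
  rw [Matrix.mul_apply]
  calc ∑ k, Q i k * Ds k j
      = ∑ k, ∫ u in Ioi (0:ℝ), Q i k * (exp (u • Q) k j - π j) := by
        refine Finset.sum_congr rfl fun k _ => ?_
        rw [hDsval k j, MeasureTheory.integral_const_mul]
    _ = ∫ u in Ioi (0:ℝ), ∑ k, Q i k * (exp (u • Q) k j - π j) :=
        (integral_finset_sum _ fun k _ => (hint k j).const_mul _).symm
    _ = ∫ u in Ioi (0:ℝ), (Q * exp (u • Q)) i j := by
        simp only [QE_eq (π := π) hQ i j]
    _ = π j - (1 : Matrix (Fin p) (Fin p) ℝ) i j := integral_QE hQ hint i j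

lemma DsQ_entry (hQ : ∀ i, ∑ j, Q i j = 0) (hπQ : π ᵥ* Q = 0)
    (hint : ∀ i j, IntegrableOn (fun u => exp (u • Q) i j - π j) (Ioi (0:ℝ)) volume)
    (hDsval : ∀ i j, Ds i j = ∫ u in Ioi (0:ℝ), (exp (u • Q) i j - π j))
    (i j : Fin p) : (Ds * Q) i j = π j - (1 : Matrix (Fin p) (Fin p) ℝ) i j := by
  rw [Matrix.mul_apply]
  calc ∑ k, Ds i k * Q k j
      = ∑ k, ∫ u in Ioi (0:ℝ), (exp (u • Q) i k - π k) * Q k j := by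
        refine Finset.sum_congr rfl fun k _ => ?_
        rw [hDsval i k, MeasureTheory.integral_mul_const]
    _ = ∫ u in Ioi (0:ℝ), ∑ k, (exp (u • Q) i k - π k) * Q k j :=
        (integral_finset_sum _ fun k _ => (hint i k).mul_const _).symm
    _ = ∫ u in Ioi (0:ℝ), (Q * exp (u • Q)) i j := by
        simp only [EQ_eq hπQ i j]
    _ = π j - (1 : Matrix (Fin p) (Fin p) ℝ) i j := integral_QE hQ hint i j

lemma Ds_rowsum (hQ : ∀ i, ∑ j, Q i j = 0) (hπ1 : ∑ i, π i = 1)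
    (hint : ∀ i j, IntegrableOn (fun u => exp (u • Q) i j - π j) (Ioi (0:ℝ)) volume)
    (hDsval : ∀ i j, Ds i j = ∫ u in Ioi (0:ℝ), (exp (u • Q) i j - π j))
    (i : Fin p) : ∑ j, Ds i j = 0 := by
  calc ∑ j, Ds i j = ∑ j, ∫ u in Ioi (0:ℝ), (exp (u • Q) i j - π j) := by
        exact Finset.sum_congr rfl fun j _ => hDsval i j
    _ = ∫ u in Ioi (0:ℝ), ∑ j, (exp (u • Q) i j - π j) :=
        (integral_finset_sum _ fun j _ => hint i j).symm
    _ = 0 := by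
        have h : ∀ u : ℝ, ∑ j, (exp (u • Q) i j - π j) = 0 := by
          intro u
          rw [Finset.sum_sub_distrib, rowsum Q hQ i u, hπ1, sub_self]
        simp [h]

lemma pi_Ds (hπQ : π ᵥ* Q = 0) (hπ1 : ∑ i, π i = 1)
    (hint : ∀ i j, IntegrableOn (fun u => exp (u • Q) i j - π j) (Ioi (0:ℝ)) volume)
    (hDsval : ∀ i j, Ds i j = ∫ u in Ioi (0:ℝ), (exp (u • Q) i j - π j))
    (j : Fin p) : ∑ i, π i * Ds i j = 0 := by
  calc ∑ i, π i * Ds i j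
      = ∑ i, ∫ u in Ioi (0:ℝ), π i * (exp (u • Q) i j - π j) := by
        refine Finset.sum_congr rfl fun i _ => ?_
        rw [hDsval i j, MeasureTheory.integral_const_mul]
    _ = ∫ u in Ioi (0:ℝ), ∑ i, π i * (exp (u • Q) i j - π j) :=
        (integral_finset_sum _ fun i _ => (hint i j).const_mul _).symm
    _ = 0 := by
        have h : ∀ u : ℝ, ∑ i, π i * (exp (u • Q) i j - π j) = 0 := by
          intro u
          simp only [mul_sub, Finset.sum_sub_distrib, ← Finset.sum_mul]
          rw [pi_invariant Q π hπQ j u, hπ1, one_mul, sub_self]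
        simp [h]

end Stmt3Aux


theorem stmt3 {p : ℕ} (Q : Matrix (Fin p) (Fin p) ℝ) (π : Fin p → ℝ)
    (Ds : Matrix (Fin p) (Fin p) ℝ)
    (hQ : IsGenerator Q) (hirr : IsIrreducibleGen Q) (hπ : IsStationaryDist Q π)
    (hDs : IsDeviation Q π Ds) :
    (onePi π - Q) * (Ds + onePi π) = 1 ∧ (Ds + onePi π) * (onePi π - Q) = 1 := by
  obtain ⟨hQnn, hQrow⟩ := hQ
  obtain ⟨hπnn, hπ1, hπQ⟩ := hπ
  have hint : ∀ i j, IntegrableOn (fun u => NormedSpace.exp (u • Q) i j - π j)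
      (Set.Ioi (0:ℝ)) volume := fun i j => (hDs i j).1
  have hDsval : ∀ i j, Ds i j = ∫ u in Set.Ioi (0:ℝ), (NormedSpace.exp (u • Q) i j - π j) :=
    fun i j => (hDs i j).2
  have hQD : Q * Ds = onePi π - 1 := by
    ext i j
    rw [Stmt3Aux.QDs_entry hQrow hint hDsval i j]
    simp [onePi, Matrix.sub_apply]
  have hDQ : Ds * Q = onePi π - 1 := by
    ext i j
    rw [Stmt3Aux.DsQ_entry hQrow hπQ hint hDsval i j]
    simp [onePi, Matrix.sub_apply]
  have hQP : Q * onePi π = 0 := by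
    ext i j
    simp [Matrix.mul_apply, onePi, ← Finset.sum_mul, hQrow]
  have hPQ : onePi π * Q = 0 := by
    ext i j
    have h := congrFun hπQ j
    simpa [Matrix.mul_apply, onePi, Matrix.vecMul, dotProduct] using h
  have hPP : onePi π * onePi π = onePi π := by
    ext i j
    simp [Matrix.mul_apply, onePi, ← Finset.sum_mul, hπ1]
  have hPD : onePi π * Ds = 0 := by
    ext i j
    simpa [Matrix.mul_apply, onePi] using Stmt3Aux.pi_Ds hπQ hπ1 hint hDsval j
  have hDP : Ds * onePi π = 0 := by
    ext i j
    simp [Matrix.mul_apply, onePi, ← Finset.sum_mul, Stmt3Aux.Ds_rowsum hQrow hπ1 hint hDsval i]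
  constructor
  · rw [sub_mul, mul_add, mul_add, hPD, hPP, hQD, hQP]
    abel
  · rw [add_mul, mul_sub, mul_sub, hDP, hDQ, hPP, hPQ]
    abel
end

section
/- Let G be a p×p irreducible generator matrix with entries q_{ij} (i≠j) and row sums zero, let λ ∈ ℝ^p with λ_i > S_i := Σ_{j≠i} q_{ij}. Define the 2p×2p matrices Q̄ (block matrix with diagonal 2×2 blocks Λ̄_i = [[−λ_i, λ_i − S_i],[λ_i − S_i, −λ_i]] and off-diagonal blocks H_{ij} = q_{ij} I₂) and Q̃ (diagonal blocks Λ̃_i = [[−(λ_i + S_i), λ_i],[λ_i, −(λ_i + S_i)]], same off-diagonal blocks). Then for all integers k ≥ 0: (I_p ⊗ 1₂ᵀ) Q̃^k = (I_p ⊗ 1₂ᵀ) Q̄^k = G^k (I_p ⊗ 1₂ᵀ), and Q̃^k (I_p ⊗ 1₂) = Q̄^k (I_p ⊗ 1₂) = (I_p ⊗ 1₂) G^k. -/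
open Matrix MeasureTheory

/-- `π` is a stationary distribution of the generator `Q`: `πQ = 0`, `π1 = 1`. -/
def IsStationaryGen {n : Type*} [Fintype n] (Q : Matrix n n ℝ) (π : n → ℝ) : Prop :=
  (∀ i, 0 ≤ π i) ∧ (∑ i, π i = 1) ∧ π ᵥ* Q = 0

/-- The `p × 2p` matrix `I_p ⊗ 1₂ᵀ`, where the `2p` index set is `Fin p × Fin 2`. -/
def kronA (p : ℕ) : Matrix (Fin p) (Fin p × Fin 2) ℝ :=
  Matrix.of fun i jk => if jk.1 = i then 1 else 0

/-- The slowness condition `λ_i > S_i = ∑_{j≠i} q_{ij} = -G i i` for a generator `G`. -/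
def IsSlow {p : ℕ} (G : Matrix (Fin p) (Fin p) ℝ) (lam : Fin p → ℝ) : Prop :=
  ∀ i, -G i i < lam i

/-- The `2p × 2p` generator `Q̄` of the MTCP associated with a slow MMPP with
modulating generator `G` and rates `λ`: diagonal `2×2` blocks
`[[−λ_i, λ_i − S_i],[λ_i − S_i, −λ_i]]` (note `λ_i − S_i = λ_i + G i i`) and
off-diagonal blocks `q_{ij} I₂`. -/
def Qbar {p : ℕ} (G : Matrix (Fin p) (Fin p) ℝ) (lam : Fin p → ℝ) :
    Matrix (Fin p × Fin 2) (Fin p × Fin 2) ℝ :=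
  Matrix.of fun ik jl =>
    if ik.1 = jl.1 then (if ik.2 = jl.2 then -lam ik.1 else lam ik.1 + G ik.1 ik.1)
    else (if ik.2 = jl.2 then G ik.1 jl.1 else 0)

/-- The `2p × 2p` generator `Q̃` of the coupled MAP built from the MMPP: diagonal
blocks `[[−(λ_i + S_i), λ_i],[λ_i, −(λ_i + S_i)]]` (note `−(λ_i+S_i) = G i i − λ_i`)
and off-diagonal blocks `q_{ij} I₂`. -/
def Qtil {p : ℕ} (G : Matrix (Fin p) (Fin p) ℝ) (lam : Fin p → ℝ) :
    Matrix (Fin p × Fin 2) (Fin p × Fin 2) ℝ :=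
  Matrix.of fun ik jl =>
    if ik.1 = jl.1 then (if ik.2 = jl.2 then G ik.1 ik.1 - lam ik.1 else lam ik.1)
    else (if ik.2 = jl.2 then G ik.1 jl.1 else 0)

/-- The event-intensity matrix `D̄ = Q̄ − diag(Q̄)` of the associated MTCP. -/
def Dbar {p : ℕ} (G : Matrix (Fin p) (Fin p) ℝ) (lam : Fin p → ℝ) :
    Matrix (Fin p × Fin 2) (Fin p × Fin 2) ℝ :=
  Qbar G lam - Matrix.diagonal fun ik => Qbar G lam ik ik

/-- The event-intensity matrix `D̃` of the coupled MMPP: block diagonal with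
blocks `[[0, λ_i],[λ_i, 0]]`. -/
def Dtil {p : ℕ} (lam : Fin p → ℝ) : Matrix (Fin p × Fin 2) (Fin p × Fin 2) ℝ :=
  Matrix.of fun ik jl => if ik.1 = jl.1 ∧ ik.2 ≠ jl.2 then lam ik.1 else 0

/-- The common stationary distribution `π = (1/2) ϑ (I_p ⊗ 1₂ᵀ)` of `Q̄` and `Q̃`. -/
noncomputable def piHat {p : ℕ} (θ : Fin p → ℝ) : Fin p × Fin 2 → ℝ :=
  (1/2 : ℝ) • (θ ᵥ* kronA p)


section Aux
variable {p : ℕ} (G : Matrix (Fin p) (Fin p) ℝ) (lam : Fin p → ℝ)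

lemma kronA_mul_Qtil : kronA p * Qtil G lam = G * kronA p := by
  ext i jl
  obtain ⟨j, l⟩ := jl
  simp only [Matrix.mul_apply, kronA, Qtil, Matrix.of_apply, Fintype.sum_prod_type,
    ite_mul, one_mul, zero_mul, Finset.sum_ite_eq', Finset.mem_univ, if_true,
    mul_ite, mul_one, mul_zero, Fin.sum_univ_two]
  rw [Finset.sum_eq_single i (fun b _ hb => by simp [hb]) (by simp)]
  fin_cases l <;> by_cases h : i = j <;> simp [h] <;> ring

lemma kronA_mul_Qbar : kronA p * Qbar G lam = G * kronA p := by
  ext i jl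
  obtain ⟨j, l⟩ := jl
  simp only [Matrix.mul_apply, kronA, Qbar, Matrix.of_apply, Fintype.sum_prod_type,
    ite_mul, one_mul, zero_mul, Finset.sum_ite_eq', Finset.mem_univ, if_true,
    mul_ite, mul_one, mul_zero, Fin.sum_univ_two]
  rw [Finset.sum_eq_single i (fun b _ hb => by simp [hb]) (by simp)]
  fin_cases l <;> by_cases h : i = j <;> simp [h] <;> ring

lemma Qtil_mul_kronAT : Qtil G lam * (kronA p)ᵀ = (kronA p)ᵀ * G := by
  ext ik j
  obtain ⟨i, k⟩ := ik
  simp only [Matrix.mul_apply, kronA, Qtil, Matrix.transpose_apply, Matrix.of_apply,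
    Fintype.sum_prod_type, mul_ite, mul_one, mul_zero, ite_mul, one_mul, zero_mul,
    Finset.sum_ite_eq', Finset.mem_univ, if_true, Fin.sum_univ_two]
  rw [Finset.sum_eq_single j (fun b _ hb => by simp [hb]) (by simp)]
  fin_cases k <;> by_cases h : i = j <;> simp [h] <;> ring

lemma Qbar_mul_kronAT : Qbar G lam * (kronA p)ᵀ = (kronA p)ᵀ * G := by
  ext ik j
  obtain ⟨i, k⟩ := ik
  simp only [Matrix.mul_apply, kronA, Qbar, Matrix.transpose_apply, Matrix.of_apply,
    Fintype.sum_prod_type, mul_ite, mul_one, mul_zero, ite_mul, one_mul, zero_mul,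
    Finset.sum_ite_eq', Finset.mem_univ, if_true, Fin.sum_univ_two]
  rw [Finset.sum_eq_single j (fun b _ hb => by simp [hb]) (by simp)]
  fin_cases k <;> by_cases h : i = j <;> simp [h] <;> ring

lemma left_pow {Q : Matrix (Fin p × Fin 2) (Fin p × Fin 2) ℝ}
    (h : kronA p * Q = G * kronA p) (k : ℕ) :
    kronA p * Q ^ k = G ^ k * kronA p := by
  induction k with
  | zero => simp
  | succ k ih =>
    rw [pow_succ, pow_succ, ← Matrix.mul_assoc, ih, Matrix.mul_assoc, h,
      ← Matrix.mul_assoc]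

lemma right_pow {Q : Matrix (Fin p × Fin 2) (Fin p × Fin 2) ℝ}
    (h : Q * (kronA p)ᵀ = (kronA p)ᵀ * G) (k : ℕ) :
    Q ^ k * (kronA p)ᵀ = (kronA p)ᵀ * G ^ k := by
  induction k with
  | zero => simp
  | succ k ih =>
    rw [pow_succ, Matrix.mul_assoc, h, ← Matrix.mul_assoc, ih, Matrix.mul_assoc,
      ← pow_succ]

end Aux

theorem stmt5 {p : ℕ} (G : Matrix (Fin p) (Fin p) ℝ) (lam : Fin p → ℝ)
    (hG : IsGenerator G) (hirr : IsIrreducibleGen G) (hslow : IsSlow G lam) :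
    ∀ k : ℕ,
      kronA p * (Qtil G lam) ^ k = G ^ k * kronA p ∧
      kronA p * (Qbar G lam) ^ k = G ^ k * kronA p ∧
      (Qtil G lam) ^ k * (kronA p)ᵀ = (kronA p)ᵀ * G ^ k ∧
      (Qbar G lam) ^ k * (kronA p)ᵀ = (kronA p)ᵀ * G ^ k := fun k =>
  ⟨left_pow G (kronA_mul_Qtil G lam) k, left_pow G (kronA_mul_Qbar G lam) k,
   right_pow G (Qtil_mul_kronAT G lam) k, right_pow G (Qbar_mul_kronAT G lam) k⟩
end

section
/- With Q̄, Q̃, G as above and ϑ the stationary distribution of G (ϑG = 0, ϑ1_p = 1), the row vector π := (1/2) ϑ (I_p ⊗ 1₂ᵀ) is a stationary distribution for both Q̄ and Q̃: πQ̄ = 0, πQ̃ = 0, and π1_{2p} = 1. -/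
open Matrix MeasureTheory

lemma piHat_apply {p : ℕ} (θ : Fin p → ℝ) (ik : Fin p × Fin 2) :
    piHat θ ik = θ ik.1 / 2 := by
  simp only [piHat, Pi.smul_apply, smul_eq_mul, vecMul, dotProduct, kronA, Matrix.of_apply,
    mul_ite, mul_one, mul_zero]
  rw [Finset.sum_ite_eq (Finset.univ) ik.1 θ]
  simp; ring

lemma sum_k_Qbar {p : ℕ} (G : Matrix (Fin p) (Fin p) ℝ) (lam : Fin p → ℝ)
    (i j : Fin p) (l : Fin 2) :
    ∑ k : Fin 2, Qbar G lam (i, k) (j, l) = G i j := by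
  simp only [Fin.sum_univ_two, Qbar, Matrix.of_apply]
  by_cases h : i = j
  · subst h; fin_cases l <;> (simp; try ring)
  · simp only [h, if_false]; fin_cases l <;> simp

lemma sum_k_Qtil {p : ℕ} (G : Matrix (Fin p) (Fin p) ℝ) (lam : Fin p → ℝ)
    (i j : Fin p) (l : Fin 2) :
    ∑ k : Fin 2, Qtil G lam (i, k) (j, l) = G i j := by
  simp only [Fin.sum_univ_two, Qtil, Matrix.of_apply]
  by_cases h : i = j
  · subst h; fin_cases l <;> (simp; try ring)
  · simp only [h, if_false]; fin_cases l <;> simp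

lemma vecMul_zero_of {p : ℕ} (G : Matrix (Fin p) (Fin p) ℝ)
    (Q : Matrix (Fin p × Fin 2) (Fin p × Fin 2) ℝ)
    (hQ : ∀ i j l, ∑ k : Fin 2, Q (i, k) (j, l) = G i j)
    (θ : Fin p → ℝ) (hθ : θ ᵥ* G = 0) : piHat θ ᵥ* Q = 0 := by
  funext jl
  obtain ⟨j, l⟩ := jl
  have key : (piHat θ ᵥ* Q) (j, l) = (1/2 : ℝ) * (θ ᵥ* G) j := by
    simp only [vecMul, dotProduct]
    rw [show (∑ x : Fin p × Fin 2, piHat θ x * Q x (j, l))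
        = ∑ i, ∑ k, piHat θ (i, k) * Q (i, k) (j, l) from Fintype.sum_prod_type _,
      Finset.mul_sum]
    refine Finset.sum_congr rfl fun i _ => ?_
    simp only [piHat_apply, ← hQ i j l, Finset.mul_sum]
    exact Finset.sum_congr rfl fun k _ => by ring
  rw [key, hθ]
  simp

theorem stmt7 {p : ℕ} (G : Matrix (Fin p) (Fin p) ℝ) (lam : Fin p → ℝ)
    (hG : IsGenerator G) (hirr : IsIrreducibleGen G) (hslow : IsSlow G lam)
    (θ : Fin p → ℝ) (hθ : IsStationaryDist G θ) :
    piHat θ ᵥ* Qbar G lam = 0 ∧ piHat θ ᵥ* Qtil G lam = 0 ∧ ∑ ik, piHat θ ik = 1 := by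
  refine ⟨vecMul_zero_of G _ (fun i j l => sum_k_Qbar G lam i j l) θ hθ.2.2,
    vecMul_zero_of G _ (fun i j l => sum_k_Qtil G lam i j l) θ hθ.2.2, ?_⟩
  rw [Fintype.sum_prod_type]
  have h1 := hθ.2.1
  calc ∑ i : Fin p, ∑ k : Fin 2, piHat θ (i, k)
      = ∑ i : Fin p, θ i := by
        refine Finset.sum_congr rfl fun i _ => ?_
        simp [Fin.sum_univ_two, piHat_apply]; ring
    _ = 1 := h1
end

section
/- With the above setup, D♯_{Q̄}(I_p ⊗ 1₂) = D♯_{Q̃}(I_p ⊗ 1₂) and (I_p ⊗ 1₂ᵀ)D♯_{Q̄} = (I_p ⊗ 1₂ᵀ)D♯_{Q̃}. -/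
open Matrix MeasureTheory

lemma exp_intertwine {n m : Type*} [Fintype n] [Fintype m] [DecidableEq n] [DecidableEq m]
    (M : Matrix n n ℝ) (N : Matrix m m ℝ) (X : Matrix n m ℝ) (h : M * X = X * N) :
    NormedSpace.exp M * X = X * NormedSpace.exp N := by
  letI : NormedRing (Matrix n n ℝ) := Matrix.linftyOpNormedRing
  letI : NormedAlgebra ℝ (Matrix n n ℝ) := Matrix.linftyOpNormedAlgebra
  letI : NormedRing (Matrix m m ℝ) := Matrix.linftyOpNormedRing
  letI : NormedAlgebra ℝ (Matrix m m ℝ) := Matrix.linftyOpNormedAlgebra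
  have hpow : ∀ k : ℕ, M ^ k * X = X * N ^ k := by
    intro k
    induction k with
    | zero => simp
    | succ k ih => rw [pow_succ, pow_succ, Matrix.mul_assoc, h, ← Matrix.mul_assoc, ih,
        Matrix.mul_assoc]
  let L : Matrix n n ℝ →L[ℝ] Matrix n m ℝ :=
    LinearMap.toContinuousLinearMap
      { toFun := fun Y => Y * X
        map_add' := fun a b => Matrix.add_mul a b X
        map_smul' := fun c a => Matrix.smul_mul c a X }
  let R : Matrix m m ℝ →L[ℝ] Matrix n m ℝ :=
    LinearMap.toContinuousLinearMap
      { toFun := fun Y => X * Y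
        map_add' := fun a b => Matrix.mul_add X a b
        map_smul' := fun c a => Matrix.mul_smul X c a }
  have hL : ∀ Y, L Y = Y * X := fun _ => rfl
  have hR : ∀ Y, R Y = X * Y := fun _ => rfl
  have hM := NormedSpace.expSeries_summable' (𝕂 := ℝ) M
  have hN := NormedSpace.expSeries_summable' (𝕂 := ℝ) N
  calc NormedSpace.exp M * X = L (∑' k : ℕ, ((Nat.factorial k : ℝ)⁻¹) • M ^ k) := by
        rw [hL, NormedSpace.exp_eq_tsum ℝ]
    _ = ∑' k : ℕ, ((Nat.factorial k : ℝ)⁻¹) • (X * N ^ k) := by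
        rw [L.map_tsum hM]
        simp only [hL, _root_.map_smul, Matrix.smul_mul, hpow]
    _ = R (∑' k : ℕ, ((Nat.factorial k : ℝ)⁻¹) • N ^ k) := by
        rw [R.map_tsum hN]
        simp only [hR, _root_.map_smul, Matrix.mul_smul]
    _ = X * NormedSpace.exp N := by rw [hR, NormedSpace.exp_eq_tsum ℝ]


lemma mul_kronAT_apply {p : ℕ} (E : Matrix (Fin p × Fin 2) (Fin p × Fin 2) ℝ)
    (ik : Fin p × Fin 2) (j : Fin p) :
    (E * (kronA p)ᵀ) ik j = E ik (j, 0) + E ik (j, 1) := by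
  rw [Matrix.mul_apply, Fintype.sum_prod_type, Finset.sum_comm]
  simp [kronA, Finset.sum_ite_eq', Fin.sum_univ_two]

lemma kronA_mul_apply {p : ℕ} (E : Matrix (Fin p × Fin 2) (Fin p × Fin 2) ℝ)
    (i : Fin p) (jl : Fin p × Fin 2) :
    (kronA p * E) i jl = E (i, 0) jl + E (i, 1) jl := by
  rw [Matrix.mul_apply, Fintype.sum_prod_type]
  simp [kronA, Finset.sum_ite_eq', Fin.sum_univ_two]

lemma kronAT_mul_apply {p : ℕ} (G : Matrix (Fin p) (Fin p) ℝ)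
    (ik : Fin p × Fin 2) (j : Fin p) :
    ((kronA p)ᵀ * G) ik j = G ik.1 j := by
  rw [Matrix.mul_apply]
  simp [kronA, Finset.sum_ite_eq']

lemma mul_kronA_apply {p : ℕ} (G : Matrix (Fin p) (Fin p) ℝ)
    (i : Fin p) (jl : Fin p × Fin 2) :
    (G * kronA p) i jl = G i jl.1 := by
  rw [Matrix.mul_apply]
  simp [kronA, Finset.sum_ite_eq]

lemma Qbar_kronAT {p : ℕ} (G : Matrix (Fin p) (Fin p) ℝ) (lam : Fin p → ℝ) :
    Qbar G lam * (kronA p)ᵀ = (kronA p)ᵀ * G := by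
  ext ik j
  rw [mul_kronAT_apply, kronAT_mul_apply]
  obtain ⟨i, k⟩ := ik
  by_cases h : i = j
  · subst h
    fin_cases k <;> simp [Qbar]
  · fin_cases k <;> simp [Qbar, h]

lemma Qtil_kronAT {p : ℕ} (G : Matrix (Fin p) (Fin p) ℝ) (lam : Fin p → ℝ) :
    Qtil G lam * (kronA p)ᵀ = (kronA p)ᵀ * G := by
  ext ik j
  rw [mul_kronAT_apply, kronAT_mul_apply]
  obtain ⟨i, k⟩ := ik
  by_cases h : i = j
  · subst h
    fin_cases k <;> simp [Qtil]
  · fin_cases k <;> simp [Qtil, h]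

lemma kronA_Qbar {p : ℕ} (G : Matrix (Fin p) (Fin p) ℝ) (lam : Fin p → ℝ) :
    kronA p * Qbar G lam = G * kronA p := by
  ext i jl
  rw [kronA_mul_apply, mul_kronA_apply]
  obtain ⟨j, l⟩ := jl
  by_cases h : i = j
  · subst h
    fin_cases l <;> simp [Qbar]
  · fin_cases l <;> simp [Qbar, h]

lemma kronA_Qtil {p : ℕ} (G : Matrix (Fin p) (Fin p) ℝ) (lam : Fin p → ℝ) :
    kronA p * Qtil G lam = G * kronA p := by
  ext i jl
  rw [kronA_mul_apply, mul_kronA_apply]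
  obtain ⟨j, l⟩ := jl
  by_cases h : i = j
  · subst h
    fin_cases l <;> simp [Qtil]
  · fin_cases l <;> simp [Qtil, h]


lemma exp_kronAT_eq {p : ℕ} (G : Matrix (Fin p) (Fin p) ℝ) (lam : Fin p → ℝ) (u : ℝ) :
    NormedSpace.exp (u • Qbar G lam) * (kronA p)ᵀ
      = NormedSpace.exp (u • Qtil G lam) * (kronA p)ᵀ := by
  rw [exp_intertwine (u • Qbar G lam) (u • G) (kronA p)ᵀ
      (by rw [Matrix.smul_mul, Qbar_kronAT, Matrix.mul_smul]),
    exp_intertwine (u • Qtil G lam) (u • G) (kronA p)ᵀ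
      (by rw [Matrix.smul_mul, Qtil_kronAT, Matrix.mul_smul])]

lemma kronA_exp_eq {p : ℕ} (G : Matrix (Fin p) (Fin p) ℝ) (lam : Fin p → ℝ) (u : ℝ) :
    kronA p * NormedSpace.exp (u • Qbar G lam)
      = kronA p * NormedSpace.exp (u • Qtil G lam) := by
  rw [← exp_intertwine (u • G) (u • Qbar G lam) (kronA p)
      (by rw [Matrix.smul_mul, Matrix.mul_smul, kronA_Qbar]),
    ← exp_intertwine (u • G) (u • Qtil G lam) (kronA p)
      (by rw [Matrix.smul_mul, Matrix.mul_smul, kronA_Qtil])]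

theorem stmt11 {p : ℕ} (G : Matrix (Fin p) (Fin p) ℝ) (lam : Fin p → ℝ)
    (hG : IsGenerator G) (hirr : IsIrreducibleGen G) (hslow : IsSlow G lam)
    (θ : Fin p → ℝ) (hθ : IsStationaryDist G θ)
    (DsG : Matrix (Fin p) (Fin p) ℝ) (hDsG : IsDeviation G θ DsG)
    (DsQb DsQt : Matrix (Fin p × Fin 2) (Fin p × Fin 2) ℝ)
    (hDsQb : IsDeviation (Qbar G lam) (piHat θ) DsQb)
    (hDsQt : IsDeviation (Qtil G lam) (piHat θ) DsQt) :
    DsQb * (kronA p)ᵀ = DsQt * (kronA p)ᵀ ∧ kronA p * DsQb = kronA p * DsQt := by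
  constructor
  · ext ik j
    rw [mul_kronAT_apply, mul_kronAT_apply]
    obtain ⟨hb0i, hb0⟩ := hDsQb ik (j, 0)
    obtain ⟨hb1i, hb1⟩ := hDsQb ik (j, 1)
    obtain ⟨ht0i, ht0⟩ := hDsQt ik (j, 0)
    obtain ⟨ht1i, ht1⟩ := hDsQt ik (j, 1)
    rw [hb0, hb1, ht0, ht1, ← MeasureTheory.integral_add hb0i hb1i,
      ← MeasureTheory.integral_add ht0i ht1i]
    apply MeasureTheory.integral_congr_ae
    filter_upwards with u
    have h := congrFun (congrFun (exp_kronAT_eq G lam u) ik) j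
    rw [mul_kronAT_apply, mul_kronAT_apply] at h
    show _ = _
    linarith
  · ext i jl
    rw [kronA_mul_apply, kronA_mul_apply]
    obtain ⟨hb0i, hb0⟩ := hDsQb (i, 0) jl
    obtain ⟨hb1i, hb1⟩ := hDsQb (i, 1) jl
    obtain ⟨ht0i, ht0⟩ := hDsQt (i, 0) jl
    obtain ⟨ht1i, ht1⟩ := hDsQt (i, 1) jl
    rw [hb0, hb1, ht0, ht1, ← MeasureTheory.integral_add hb0i hb1i,
      ← MeasureTheory.integral_add ht0i ht1i]
    apply MeasureTheory.integral_congr_ae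
    filter_upwards with u
    have h := congrFun (congrFun (kronA_exp_eq G lam u) i) jl
    rw [kronA_mul_apply, kronA_mul_apply] at h
    show _ = _
    linarith
end

section
/- Let Q̄, Q̃, D̄, D̃, π be as in the slow-MMPP/MTCP construction. Then the time-stationary mean counts agree for all t ≥ 0: π D̃ 1_{2p} · t = π D̄ 1_{2p} · t, and the time-stationary variances agree: π D̄ 1 t + 2πD̄ D♯_{Q̄} D̄ 1 t − 2πD̄ D♯_{Q̄} D♯_{Q̄}(t) D̄ 1 = π D̃ 1 t + 2πD̃ D♯_{Q̃} D̃ 1 t − 2πD̃ D♯_{Q̃} D♯_{Q̃}(t) D̃ 1 for all t ≥ 0. -/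
open Matrix MeasureTheory

namespace Stmt15Aux

open Matrix MeasureTheory NormedSpace

/-- The lifting matrix `L = I_p ⊗ 1₂`. -/
def Lmat (p : ℕ) : Matrix (Fin p × Fin 2) (Fin p) ℝ :=
  Matrix.of fun ik j => if ik.1 = j then 1 else 0

lemma exp_intertwine {n m : Type*} [Fintype n] [Fintype m] [DecidableEq n] [DecidableEq m]
    (A : Matrix n n ℝ) (B : Matrix m m ℝ) (L : Matrix n m ℝ) (h : A * L = L * B) :
    NormedSpace.exp A * L = L * NormedSpace.exp B := by
  letI : NormedRing (Matrix n n ℝ) := Matrix.linftyOpNormedRing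
  letI : NormedAlgebra ℝ (Matrix n n ℝ) := Matrix.linftyOpNormedAlgebra
  letI : NormedRing (Matrix m m ℝ) := Matrix.linftyOpNormedRing
  letI : NormedAlgebra ℝ (Matrix m m ℝ) := Matrix.linftyOpNormedAlgebra
  have hpow : ∀ k : ℕ, A ^ k * L = L * B ^ k := by
    intro k
    induction k with
    | zero => simp
    | succ k ih =>
      rw [pow_succ, pow_succ, Matrix.mul_assoc, h, ← Matrix.mul_assoc, ih, Matrix.mul_assoc]
  have hA : HasSum (fun k : ℕ => ((Nat.factorial k : ℝ))⁻¹ • A ^ k) (NormedSpace.exp A) :=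
    NormedSpace.exp_series_hasSum_exp' A
  have hB : HasSum (fun k : ℕ => ((Nat.factorial k : ℝ))⁻¹ • B ^ k) (NormedSpace.exp B) :=
    NormedSpace.exp_series_hasSum_exp' B
  have gA : (Matrix n n ℝ) →+ (Matrix n m ℝ) :=
    AddMonoidHom.mk' (fun X => X * L) (fun X Y => Matrix.add_mul X Y L)
  have hAL : HasSum (fun k : ℕ => (((Nat.factorial k : ℝ))⁻¹ • A ^ k) * L) (NormedSpace.exp A * L) :=
    hA.map (AddMonoidHom.mk' (fun X => X * L) (fun X Y => Matrix.add_mul X Y L))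
      ((continuous_id.matrix_mul continuous_const))
  have hLB : HasSum (fun k : ℕ => L * (((Nat.factorial k : ℝ))⁻¹ • B ^ k)) (L * NormedSpace.exp B) :=
    hB.map (AddMonoidHom.mk' (fun X => L * X) (fun X Y => Matrix.mul_add L X Y))
      ((continuous_const.matrix_mul continuous_id))
  have heq : (fun k : ℕ => (((Nat.factorial k : ℝ))⁻¹ • A ^ k) * L)
      = fun k : ℕ => L * (((Nat.factorial k : ℝ))⁻¹ • B ^ k) := by
    funext k
    rw [Matrix.smul_mul, hpow k, Matrix.mul_smul]
  rw [heq] at hAL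
  exact hAL.unique hLB

lemma exp_entry_continuous {n : Type*} [Fintype n] [DecidableEq n] (Q : Matrix n n ℝ) (a b : n) :
    Continuous fun u : ℝ => NormedSpace.exp (u • Q) a b := by
  letI : NormedRing (Matrix n n ℝ) := Matrix.linftyOpNormedRing
  letI : NormedAlgebra ℝ (Matrix n n ℝ) := Matrix.linftyOpNormedAlgebra
  have h1 : Continuous fun u : ℝ => u • Q := continuous_id.smul continuous_const
  letI : NormedAlgebra ℚ (Matrix n n ℝ) := NormedAlgebra.restrictScalars ℚ ℝ (Matrix n n ℝ)
  have h2 : Continuous (NormedSpace.exp : Matrix n n ℝ → Matrix n n ℝ) :=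
    NormedSpace.exp_continuous
  exact ((continuous_apply b).comp (continuous_apply a)).comp (h2.comp h1)

lemma Qbar_mul_L {p : ℕ} (G : Matrix (Fin p) (Fin p) ℝ) (lam : Fin p → ℝ) :
    Qbar G lam * Lmat p = Lmat p * G := by
  ext ik j
  obtain ⟨i, k⟩ := ik
  rw [Matrix.mul_apply, Matrix.mul_apply, Fintype.sum_prod_type]
  simp only [Qbar, Lmat, Matrix.of_apply, mul_ite, mul_one, mul_zero, ite_mul, one_mul, zero_mul]
  rw [Finset.sum_comm]
  by_cases hij : i = j
  · subst hij
    fin_cases k <;> simp [Fin.sum_univ_two, Finset.sum_ite_eq, Finset.sum_ite_eq'] <;> ring_nf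
  · fin_cases k <;> simp [Fin.sum_univ_two, Finset.sum_ite_eq, Finset.sum_ite_eq', hij] <;> ring_nf

lemma Qtil_mul_L {p : ℕ} (G : Matrix (Fin p) (Fin p) ℝ) (lam : Fin p → ℝ) :
    Qtil G lam * Lmat p = Lmat p * G := by
  ext ik j
  obtain ⟨i, k⟩ := ik
  rw [Matrix.mul_apply, Matrix.mul_apply, Fintype.sum_prod_type]
  simp only [Qtil, Lmat, Matrix.of_apply, mul_ite, mul_one, mul_zero, ite_mul, one_mul, zero_mul]
  rw [Finset.sum_comm]
  by_cases hij : i = j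
  · subst hij
    fin_cases k <;> simp [Fin.sum_univ_two, Finset.sum_ite_eq, Finset.sum_ite_eq'] <;> ring_nf
  · fin_cases k <;> simp [Fin.sum_univ_two, Finset.sum_ite_eq, Finset.sum_ite_eq', hij] <;> ring_nf

/-- Row-of-block sums of the semigroup of a lifted generator agree with the small semigroup. -/
lemma exp_row_sum {p : ℕ} (G : Matrix (Fin p) (Fin p) ℝ)
    (Q : Matrix (Fin p × Fin 2) (Fin p × Fin 2) ℝ) (hQ : Q * Lmat p = Lmat p * G)
    (u : ℝ) (i : Fin p) (k : Fin 2) (j : Fin p) :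
    ∑ l : Fin 2, NormedSpace.exp (u • Q) (i, k) (j, l) = NormedSpace.exp (u • G) i j := by
  have h2 : (u • Q) * Lmat p = Lmat p * (u • G) := by
    rw [Matrix.smul_mul, hQ, Matrix.mul_smul]
  have h3 := exp_intertwine (u • Q) (u • G) (Lmat p) h2
  have h4 := congrFun (congrFun h3 (i, k)) j
  rw [Matrix.mul_apply, Matrix.mul_apply, Fintype.sum_prod_type] at h4
  simpa [Lmat, mul_ite, ite_mul, Finset.sum_ite_eq, Finset.sum_ite_eq'] using h4

lemma piHat_apply {p : ℕ} (θ : Fin p → ℝ) (jl : Fin p × Fin 2) :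
    piHat θ jl = θ jl.1 / 2 := by
  simp [piHat, Matrix.vecMul, dotProduct, kronA, mul_ite, Finset.sum_ite_eq,
    Finset.sum_ite_eq']
  ring

lemma sum_integrand {p : ℕ} (G : Matrix (Fin p) (Fin p) ℝ) (θ : Fin p → ℝ)
    (Q : Matrix (Fin p × Fin 2) (Fin p × Fin 2) ℝ) (hQ : Q * Lmat p = Lmat p * G)
    (f : Fin p → ℝ) (u : ℝ) (i : Fin p) (k : Fin 2) :
    ∑ x : Fin p × Fin 2, (NormedSpace.exp (u • Q) (i, k) x - piHat θ x) * f x.1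
      = (∑ j, NormedSpace.exp (u • G) i j * f j) - ∑ j, θ j * f j := by
  rw [Fintype.sum_prod_type, ← Finset.sum_sub_distrib]
  refine Finset.sum_congr rfl fun j _ => ?_
  have h1 := exp_row_sum G Q hQ u i k j
  calc ∑ l : Fin 2, (NormedSpace.exp (u • Q) (i, k) (j, l) - piHat θ (j, l)) * f j
      = (∑ l : Fin 2, NormedSpace.exp (u • Q) (i, k) (j, l)) * f j
        - (∑ l : Fin 2, piHat θ (j, l)) * f j := by
        simp only [Fin.sum_univ_two]; ring
    _ = NormedSpace.exp (u • G) i j * f j - θ j * f j := by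
        rw [h1, Fin.sum_univ_two, piHat_apply, piHat_apply]; ring_nf

lemma dev_apply {p : ℕ} (G : Matrix (Fin p) (Fin p) ℝ) (θ : Fin p → ℝ)
    (Q : Matrix (Fin p × Fin 2) (Fin p × Fin 2) ℝ) (hQ : Q * Lmat p = Lmat p * G)
    (Ds : Matrix (Fin p × Fin 2) (Fin p × Fin 2) ℝ) (hDs : IsDeviation Q (piHat θ) Ds)
    (f : Fin p → ℝ) (i : Fin p) (k : Fin 2) :
    (Ds *ᵥ fun jl => f jl.1) (i, k)
      = ∫ u in Set.Ioi (0:ℝ),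
          ((∑ j, NormedSpace.exp (u • G) i j * f j) - ∑ j, θ j * f j) := by
  have step1 : (Ds *ᵥ fun jl => f jl.1) (i, k)
      = ∑ x : Fin p × Fin 2,
          ∫ u in Set.Ioi (0:ℝ), (NormedSpace.exp (u • Q) (i, k) x - piHat θ x) * f x.1 := by
    rw [Matrix.mulVec, dotProduct]
    refine Finset.sum_congr rfl fun x _ => ?_
    rw [(hDs (i, k) x).2, ← MeasureTheory.integral_mul_const]
  rw [step1, ← MeasureTheory.integral_finset_sum _
    (fun x _ => ((hDs (i, k) x).1.mul_const (f x.1)))]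
  exact MeasureTheory.setIntegral_congr_fun measurableSet_Ioi fun u _ =>
    sum_integrand G θ Q hQ f u i k

lemma tdev_apply {p : ℕ} (G : Matrix (Fin p) (Fin p) ℝ) (θ : Fin p → ℝ)
    (Q : Matrix (Fin p × Fin 2) (Fin p × Fin 2) ℝ) (hQ : Q * Lmat p = Lmat p * G)
    (Dt : ℝ → Matrix (Fin p × Fin 2) (Fin p × Fin 2) ℝ)
    (hDt : IsTransientDeviation Q (piHat θ) Dt)
    (f : Fin p → ℝ) (t : ℝ) (i : Fin p) (k : Fin 2) :
    (Dt t *ᵥ fun jl => f jl.1) (i, k)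
      = ∫ u in Set.Ioc (0:ℝ) t,
          ((∑ j, NormedSpace.exp (u • G) i j * f j) - ∑ j, θ j * f j) := by
  have hint : ∀ x : Fin p × Fin 2,
      IntegrableOn (fun u => (NormedSpace.exp (u • Q) (i, k) x - piHat θ x) * f x.1)
        (Set.Ioc (0:ℝ) t) MeasureTheory.volume := by
    intro x
    exact (((exp_entry_continuous Q (i, k) x).sub continuous_const).mul
      continuous_const).integrableOn_Ioc
  have step1 : (Dt t *ᵥ fun jl => f jl.1) (i, k)
      = ∑ x : Fin p × Fin 2,
          ∫ u in Set.Ioc (0:ℝ) t,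
            (NormedSpace.exp (u • Q) (i, k) x - piHat θ x) * f x.1 := by
    rw [Matrix.mulVec, dotProduct]
    refine Finset.sum_congr rfl fun x _ => ?_
    rw [hDt t (i, k) x, ← MeasureTheory.integral_mul_const]
  rw [step1, ← MeasureTheory.integral_finset_sum _ (fun x _ => hint x)]
  exact MeasureTheory.setIntegral_congr_fun measurableSet_Ioc fun u _ =>
    sum_integrand G θ Q hQ f u i k

lemma Dbar_mulVec_one {p : ℕ} (G : Matrix (Fin p) (Fin p) ℝ) (lam : Fin p → ℝ)
    (hG : ∀ i, ∑ j, G i j = 0) :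
    Dbar G lam *ᵥ (1 : Fin p × Fin 2 → ℝ) = fun ik => lam ik.1 := by
  funext ik
  obtain ⟨i, k⟩ := ik
  rw [Matrix.mulVec, dotProduct, Fintype.sum_prod_type]
  have key : ∀ j, ∑ l : Fin 2, Dbar G lam (i, k) (j, l) * (1 : Fin p × Fin 2 → ℝ) (j, l)
      = (if j = i then lam i else 0) + G i j := by
    intro j
    by_cases hij : i = j
    · subst hij
      fin_cases k <;>
        simp [Fin.sum_univ_two, Dbar, Qbar, Matrix.diagonal_apply, Prod.ext_iff] <;> ring
    · fin_cases k <;>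
        simp [Fin.sum_univ_two, Dbar, Qbar, Matrix.diagonal_apply, Prod.ext_iff, hij,
          Ne.symm hij] <;> ring
  rw [Finset.sum_congr rfl fun j _ => key j, Finset.sum_add_distrib, hG i,
    Finset.sum_ite_eq' Finset.univ i (fun _ => lam i)]
  simp

lemma Dtil_mulVec_one {p : ℕ} (lam : Fin p → ℝ) :
    Dtil lam *ᵥ (1 : Fin p × Fin 2 → ℝ) = fun ik => lam ik.1 := by
  funext ik
  obtain ⟨i, k⟩ := ik
  rw [Matrix.mulVec, dotProduct, Fintype.sum_prod_type]
  have key : ∀ j, ∑ l : Fin 2, Dtil lam (i, k) (j, l) * (1 : Fin p × Fin 2 → ℝ) (j, l)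
      = if j = i then lam i else 0 := by
    intro j
    by_cases hij : i = j
    · subst hij; fin_cases k <;> simp [Fin.sum_univ_two, Dtil]
    · fin_cases k <;> simp [Fin.sum_univ_two, Dtil, hij, Ne.symm hij]
  rw [Finset.sum_congr rfl fun j _ => key j, Finset.sum_ite_eq' Finset.univ i (fun _ => lam i)]
  simp

lemma piHat_vecMul_Dbar {p : ℕ} (G : Matrix (Fin p) (Fin p) ℝ) (lam : Fin p → ℝ)
    (θ : Fin p → ℝ) (hθ : θ ᵥ* G = 0) :
    piHat θ ᵥ* Dbar G lam = fun jl => θ jl.1 * lam jl.1 / 2 := by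
  funext jl
  obtain ⟨j, l⟩ := jl
  have hstat : ∑ i, θ i * G i j = 0 := by
    have := congrFun hθ j
    simpa [Matrix.vecMul, dotProduct] using this
  show ∑ ik : Fin p × Fin 2, piHat θ ik * Dbar G lam ik (j, l) = θ j * lam j / 2
  rw [Fintype.sum_prod_type]
  have key : ∀ i, ∑ k : Fin 2, piHat θ (i, k) * Dbar G lam (i, k) (j, l)
      = (if i = j then θ j / 2 * lam j else 0) + θ i / 2 * G i j := by
    intro i
    by_cases hij : i = j
    · subst hij
      fin_cases l <;>
        simp [Fin.sum_univ_two, piHat_apply, Dbar, Qbar, Matrix.diagonal_apply,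
          Prod.ext_iff] <;> ring
    · fin_cases l <;>
        simp [Fin.sum_univ_two, piHat_apply, Dbar, Qbar, Matrix.diagonal_apply,
          Prod.ext_iff, hij] <;> ring
  rw [Finset.sum_congr rfl fun i _ => key i, Finset.sum_add_distrib,
    Finset.sum_ite_eq' Finset.univ j (fun _ => θ j / 2 * lam j)]
  have : ∑ i, θ i / 2 * G i j = (∑ i, θ i * G i j) / 2 := by
    rw [Finset.sum_div]; exact Finset.sum_congr rfl fun i _ => by ring
  rw [this, hstat]
  simp
  ring

lemma piHat_vecMul_Dtil {p : ℕ} (lam : Fin p → ℝ) (θ : Fin p → ℝ) :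
    piHat θ ᵥ* Dtil lam = fun jl => θ jl.1 * lam jl.1 / 2 := by
  funext jl
  obtain ⟨j, l⟩ := jl
  show ∑ ik : Fin p × Fin 2, piHat θ ik * Dtil lam ik (j, l) = θ j * lam j / 2
  rw [Fintype.sum_prod_type]
  have key : ∀ i, ∑ k : Fin 2, piHat θ (i, k) * Dtil lam (i, k) (j, l)
      = if i = j then θ j / 2 * lam j else 0 := by
    intro i
    by_cases hij : i = j
    · subst hij; fin_cases l <;> simp [Fin.sum_univ_two, piHat_apply, Dtil] <;> ring
    · fin_cases l <;> simp [Fin.sum_univ_two, piHat_apply, Dtil, hij]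
  rw [Finset.sum_congr rfl fun i _ => key i,
    Finset.sum_ite_eq' Finset.univ j (fun _ => θ j / 2 * lam j)]
  simp
  ring

end Stmt15Aux
theorem stmt15 {p : ℕ} (G : Matrix (Fin p) (Fin p) ℝ) (lam : Fin p → ℝ)
    (hG : IsGenerator G) (hirr : IsIrreducibleGen G) (hslow : IsSlow G lam)
    (θ : Fin p → ℝ) (hθ : IsStationaryGen G θ)
    (DsG : Matrix (Fin p) (Fin p) ℝ) (hDsG : IsDeviation G θ DsG)
    (DsQb DsQt : Matrix (Fin p × Fin 2) (Fin p × Fin 2) ℝ)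
    (hDsQb : IsDeviation (Qbar G lam) (piHat θ) DsQb)
    (hDsQt : IsDeviation (Qtil G lam) (piHat θ) DsQt)
    (DtQb DtQt : ℝ → Matrix (Fin p × Fin 2) (Fin p × Fin 2) ℝ)
    (hDtQb : IsTransientDeviation (Qbar G lam) (piHat θ) DtQb)
    (hDtQt : IsTransientDeviation (Qtil G lam) (piHat θ) DtQt) :
    ∀ t : ℝ, 0 ≤ t →
      ((piHat θ ᵥ* Dtil lam) ⬝ᵥ 1) * t = ((piHat θ ᵥ* Dbar G lam) ⬝ᵥ 1) * t ∧
      ((piHat θ ᵥ* Dbar G lam) ⬝ᵥ 1) * t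
          + 2 * ((piHat θ ᵥ* Dbar G lam) ⬝ᵥ (DsQb *ᵥ (Dbar G lam *ᵥ 1))) * t
          - 2 * ((piHat θ ᵥ* Dbar G lam) ⬝ᵥ (DsQb *ᵥ (DtQb t *ᵥ (Dbar G lam *ᵥ 1))))
        = ((piHat θ ᵥ* Dtil lam) ⬝ᵥ 1) * t
          + 2 * ((piHat θ ᵥ* Dtil lam) ⬝ᵥ (DsQt *ᵥ (Dtil lam *ᵥ 1))) * t
          - 2 * ((piHat θ ᵥ* Dtil lam) ⬝ᵥ (DsQt *ᵥ (DtQt t *ᵥ (Dtil lam *ᵥ 1)))) := by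
  intro t ht
  have hQb := Stmt15Aux.Qbar_mul_L G lam
  have hQt := Stmt15Aux.Qtil_mul_L G lam
  have hw : Dbar G lam *ᵥ (1 : Fin p × Fin 2 → ℝ) = fun ik => lam ik.1 :=
    Stmt15Aux.Dbar_mulVec_one G lam hG.2
  have hw' : Dtil lam *ᵥ (1 : Fin p × Fin 2 → ℝ) = fun ik => lam ik.1 :=
    Stmt15Aux.Dtil_mulVec_one lam
  have hπ : piHat θ ᵥ* Dbar G lam = piHat θ ᵥ* Dtil lam := by
    rw [Stmt15Aux.piHat_vecMul_Dbar G lam θ hθ.2.2, Stmt15Aux.piHat_vecMul_Dtil]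
  have hDsEq : DsQb *ᵥ (fun ik : Fin p × Fin 2 => lam ik.1)
      = DsQt *ᵥ (fun ik : Fin p × Fin 2 => lam ik.1) := by
    funext ik
    obtain ⟨i, k⟩ := ik
    rw [Stmt15Aux.dev_apply G θ _ hQb DsQb hDsQb lam i k,
      Stmt15Aux.dev_apply G θ _ hQt DsQt hDsQt lam i k]
  have hDtb : DtQb t *ᵥ (fun ik : Fin p × Fin 2 => lam ik.1)
      = fun ik : Fin p × Fin 2 =>
          (fun i => ∫ u in Set.Ioc (0:ℝ) t,
            ((∑ j, NormedSpace.exp (u • G) i j * lam j) - ∑ j, θ j * lam j)) ik.1 := by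
    funext ik
    obtain ⟨i, k⟩ := ik
    exact Stmt15Aux.tdev_apply G θ _ hQb DtQb hDtQb lam t i k
  have hDtt : DtQt t *ᵥ (fun ik : Fin p × Fin 2 => lam ik.1)
      = fun ik : Fin p × Fin 2 =>
          (fun i => ∫ u in Set.Ioc (0:ℝ) t,
            ((∑ j, NormedSpace.exp (u • G) i j * lam j) - ∑ j, θ j * lam j)) ik.1 := by
    funext ik
    obtain ⟨i, k⟩ := ik
    exact Stmt15Aux.tdev_apply G θ _ hQt DtQt hDtQt lam t i k
  have hDs2 : DsQb *ᵥ (fun ik : Fin p × Fin 2 =>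
        (fun i => ∫ u in Set.Ioc (0:ℝ) t,
          ((∑ j, NormedSpace.exp (u • G) i j * lam j) - ∑ j, θ j * lam j)) ik.1)
      = DsQt *ᵥ (fun ik : Fin p × Fin 2 =>
        (fun i => ∫ u in Set.Ioc (0:ℝ) t,
          ((∑ j, NormedSpace.exp (u • G) i j * lam j) - ∑ j, θ j * lam j)) ik.1) := by
    funext ik
    obtain ⟨i, k⟩ := ik
    exact (Stmt15Aux.dev_apply G θ _ hQb DsQb hDsQb
        (fun i => ∫ u in Set.Ioc (0:ℝ) t,
          ((∑ j, NormedSpace.exp (u • G) i j * lam j) - ∑ j, θ j * lam j)) i k).trans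
      (Stmt15Aux.dev_apply G θ _ hQt DsQt hDsQt
        (fun i => ∫ u in Set.Ioc (0:ℝ) t,
          ((∑ j, NormedSpace.exp (u • G) i j * lam j) - ∑ j, θ j * lam j)) i k).symm
  refine ⟨by rw [hπ], ?_⟩
  rw [hw, hw', hπ, hDsEq, hDtb, hDtt, hDs2]
end
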